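/- Let X be a semi-inner product module over a C*-algebra, a ∈ X, α₁,…,αₙ ∈ ℂ, p a probability vector, x₁,…,xₙ ∈ X, and r ≥ 0 with ‖xᵢ − a‖ ≤ r for all i. Then ‖Σᵢ pᵢαᵢxᵢ − (Σᵢ pᵢαᵢ)(Σᵢ pᵢxᵢ)‖ ≤ r Σᵢ pᵢ|αᵢ − Σⱼ pⱼαⱼ| ≤ r [Σᵢ pᵢ|αᵢ|² − |Σᵢ pᵢαᵢ|²]^{1/2}. -/

import Mathlib

lemma stmt15_sqrt_aux {a b c : ℝ} (ha : 0 ≤ a) (hb : 0 ≤ b)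
    (h : ∀ s : ℝ, 0 < s → c ≤ (1 + s) * a + (1 + 1 / s) * b) :
    Real.sqrt c ≤ Real.sqrt a + Real.sqrt b := by
  have hc : c ≤ (Real.sqrt a + Real.sqrt b) ^ 2 := by
    apply le_of_forall_pos_le_add
    intro ε hε
    rcases eq_or_lt_of_le ha with haz | hap
    · rcases eq_or_lt_of_le hb with hbz | hbp
      · have := h 1 one_pos
        rw [← haz, ← hbz] at this ⊢
        simp at this ⊢
        nlinarith
      · have := h (b / ε) (by positivity)
        rw [← haz] at this ⊢
        rw [Real.sqrt_zero, zero_add, Real.sq_sqrt hb]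
        have e : (1 + b / ε) * 0 + (1 + 1 / (b / ε)) * b = b + ε := by
          field_simp
          ring
        linarith [this, e.le]
    · rcases eq_or_lt_of_le hb with hbz | hbp
      · have := h (ε / a) (by positivity)
        rw [← hbz] at this ⊢
        rw [Real.sqrt_zero, add_zero, Real.sq_sqrt (le_of_lt hap)]
        have e : (1 + ε / a) * a + (1 + 1 / (ε / a)) * 0 = a + ε := by
          field_simp
          ring
        linarith [this, e.le]
      · have hs : (0:ℝ) < Real.sqrt b / Real.sqrt a := by positivity
        have := h _ hs
        have h1 : (1 + Real.sqrt b / Real.sqrt a) * a + (1 + 1 / (Real.sqrt b / Real.sqrt a)) * b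
            = (Real.sqrt a + Real.sqrt b) ^ 2 := by
          have e1 : Real.sqrt a * Real.sqrt a = a := Real.mul_self_sqrt ha
          have e2 : Real.sqrt b * Real.sqrt b = b := Real.mul_self_sqrt hb
          have pa : (0:ℝ) < Real.sqrt a := Real.sqrt_pos.2 hap
          have pb : (0:ℝ) < Real.sqrt b := Real.sqrt_pos.2 hbp
          field_simp
          nlinarith
        linarith [this, h1.le]
  calc Real.sqrt c ≤ Real.sqrt ((Real.sqrt a + Real.sqrt b) ^ 2) := Real.sqrt_le_sqrt hc
    _ = Real.sqrt a + Real.sqrt b := Real.sqrt_sq (by positivity)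

section
variable {A X : Type*} [CStarAlgebra A] [PartialOrder A] [StarOrderedRing A]
    [AddCommGroup X] [Module ℂ X]
    (inner : X → X → A)
    (h_add : ∀ x y z : X, inner x (y + z) = inner x y + inner x z)
    (h_smul_c : ∀ (c : ℂ) (x y : X), inner x (c • y) = c • inner x y)
    (h_star : ∀ x y : X, star (inner x y) = inner y x)
    (h_pos : ∀ x : X, 0 ≤ inner x x)

include h_add h_smul_c h_star in
lemma stmt15_expand (u v : X) (σ : ℝ) (hσ : σ ≠ 0) :
    inner (u + v) (u + v) +
      inner ((σ:ℂ) • u - ((σ:ℂ))⁻¹ • v) ((σ:ℂ) • u - ((σ:ℂ))⁻¹ • v) =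
      ((1 + σ^2 : ℝ) : ℂ) • inner u u + ((1 + (σ⁻¹)^2 : ℝ) : ℂ) • inner v v := by
  have h_addl : ∀ x y z : X, inner (x + y) z = inner x z + inner y z := by
    intro x y z
    rw [← h_star, h_add, star_add, h_star, h_star]
  have h_smull : ∀ (c : ℂ) (x y : X), inner (c • x) y = (star c) • inner x y := by
    intro c x y
    rw [← h_star, h_smul_c, star_smul, h_star]
  have hσc : ((σ:ℂ)) ≠ 0 := by exact_mod_cast hσ
  simp only [sub_eq_add_neg, ← neg_smul, h_add, h_addl, h_smul_c, h_smull, smul_smul,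
    star_neg, Complex.star_def, Complex.conj_ofReal, map_inv₀]
  push_cast
  match_scalars <;> field_simp <;> ring

include h_add h_smul_c h_star h_pos in
lemma stmt15_triangle (u v : X) :
    Real.sqrt ‖inner (u + v) (u + v)‖ ≤
      Real.sqrt ‖inner u u‖ + Real.sqrt ‖inner v v‖ := by
  apply stmt15_sqrt_aux (norm_nonneg _) (norm_nonneg _)
  intro s hs
  set σ := Real.sqrt s with hσdef
  have hσpos : 0 < σ := Real.sqrt_pos.2 hs
  have hσsq : σ ^ 2 = s := Real.sq_sqrt hs.le
  have key := stmt15_expand inner h_add h_smul_c h_star u v σ hσpos.ne'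
  have hle : inner (u + v) (u + v) ≤
      ((1 + σ^2 : ℝ) : ℂ) • inner u u + ((1 + (σ⁻¹)^2 : ℝ) : ℂ) • inner v v := by
    rw [← key]
    exact le_add_of_nonneg_right (h_pos _)
  have hn := CStarAlgebra.norm_le_norm_of_nonneg_of_le (h_pos (u + v)) hle
  calc ‖inner (u + v) (u + v)‖
      ≤ ‖((1 + σ^2 : ℝ) : ℂ) • inner u u‖ + ‖((1 + (σ⁻¹)^2 : ℝ) : ℂ) • inner v v‖ :=
        hn.trans (norm_add_le _ _)
    _ = (1 + s) * ‖inner u u‖ + (1 + 1 / s) * ‖inner v v‖ := by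
        rw [norm_smul, norm_smul]
        have e1 : ‖((1 + σ^2 : ℝ) : ℂ)‖ = 1 + s := by
          rw [Complex.norm_real, Real.norm_of_nonneg (by positivity), hσsq]
        have e2 : ‖((1 + (σ⁻¹)^2 : ℝ) : ℂ)‖ = 1 + 1 / s := by
          rw [Complex.norm_real, Real.norm_of_nonneg (by positivity), ← hσsq]
          rw [one_div, ← inv_pow]
        rw [e1, e2]

omit h_add in
include h_smul_c h_star in
lemma stmt15_homog (c : ℂ) (z : X) :
    Real.sqrt ‖inner (c • z) (c • z)‖ = ‖c‖ * Real.sqrt ‖inner z z‖ := by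
  have h_smull : ∀ (c : ℂ) (x y : X), inner (c • x) y = (star c) • inner x y := by
    intro c x y
    rw [← h_star, h_smul_c, star_smul, h_star]
  have : inner (c • z) (c • z) = (c * star c) • inner z z := by
    rw [h_smul_c, h_smull, smul_smul]
  rw [this, norm_smul, norm_mul, norm_star,
    Real.sqrt_mul (by positivity), Real.sqrt_mul_self (norm_nonneg c)]

include h_smul_c in
lemma stmt15_zero : Real.sqrt ‖inner (0 : X) 0‖ = 0 := by
  have : inner (0 : X) 0 = 0 := by
    have := h_smul_c 0 0 0
    simpa using this
  rw [this, norm_zero, Real.sqrt_zero]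

end

/-- If `‖xᵢ − a‖ ≤ r` for all `i`, then
`‖Σᵢ pᵢαᵢxᵢ − (Σᵢ pᵢαᵢ)(Σᵢ pᵢxᵢ)‖ ≤ r Σᵢ pᵢ|αᵢ − Σⱼ pⱼαⱼ|
  ≤ r [Σᵢ pᵢ|αᵢ|² − |Σᵢ pᵢαᵢ|²]^{1/2}`, where `‖z‖ = ‖⟨z,z⟩‖^{1/2}` for `z ∈ X`. -/
theorem stmt15 {A X : Type*} [CStarAlgebra A] [PartialOrder A] [StarOrderedRing A]
    [AddCommGroup X] [Module ℂ X]
    (inner : X → X → A)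
    (h_add : ∀ x y z : X, inner x (y + z) = inner x y + inner x z)
    (h_smul_c : ∀ (c : ℂ) (x y : X), inner x (c • y) = c • inner x y)
    (h_star : ∀ x y : X, star (inner x y) = inner y x)
    (h_pos : ∀ x : X, 0 ≤ inner x x)
    (n : ℕ) (x : Fin n → X) (a : X) (α : Fin n → ℂ) (p : Fin n → ℝ)
    (hp : ∀ i, 0 ≤ p i) (hp1 : ∑ i, p i = 1)
    (r : ℝ) (hr : 0 ≤ r)
    (hx : ∀ i, Real.sqrt ‖inner (x i - a) (x i - a)‖ ≤ r) :
    Real.sqrt ‖inner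
        (∑ i, ((p i : ℂ) * α i) • x i -
          (∑ i, (p i : ℂ) * α i) • ∑ i, (p i : ℂ) • x i)
        (∑ i, ((p i : ℂ) * α i) • x i -
          (∑ i, (p i : ℂ) * α i) • ∑ i, (p i : ℂ) • x i)‖ ≤
      r * ∑ i, p i * ‖α i - ∑ j, (p j : ℂ) * α j‖ ∧
    r * ∑ i, p i * ‖α i - ∑ j, (p j : ℂ) * α j‖ ≤
      r * Real.sqrt (∑ i, p i * ‖α i‖ ^ 2 - ‖∑ i, (p i : ℂ) * α i‖ ^ 2) := by
  set β : ℂ := ∑ j, (p j : ℂ) * α j with hβ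
  constructor
  · -- first inequality
    have hps : ∑ i, ((p i : ℂ)) = 1 := by
      rw [← Complex.ofReal_sum, hp1, Complex.ofReal_one]
    have key : (∑ i, ((p i : ℂ) * α i) • x i - (∑ i, (p i : ℂ) * α i) • ∑ i, (p i : ℂ) • x i)
        = ∑ i, ((p i : ℂ) * (α i - β)) • (x i - a) := by
      have expand : ∀ i : Fin n, ((p i : ℂ) * (α i - β)) • (x i - a)
          = ((p i : ℂ) * α i) • x i - β • ((p i : ℂ) • x i)
            - ((p i : ℂ) * α i) • a + (p i : ℂ) • (β • a) := fun i => by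
        module
      rw [Finset.sum_congr rfl fun i _ => expand i]
      rw [Finset.sum_add_distrib, Finset.sum_sub_distrib, Finset.sum_sub_distrib,
        ← Finset.smul_sum, ← Finset.sum_smul, ← Finset.sum_smul, ← hβ, hps, one_smul]
      abel
    rw [key]
    calc Real.sqrt ‖inner (∑ i, ((p i : ℂ) * (α i - β)) • (x i - a))
            (∑ i, ((p i : ℂ) * (α i - β)) • (x i - a))‖
        ≤ ∑ i, Real.sqrt ‖inner (((p i : ℂ) * (α i - β)) • (x i - a))
            (((p i : ℂ) * (α i - β)) • (x i - a))‖ :=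
          Finset.le_sum_of_subadditive (fun z => Real.sqrt ‖inner z z‖)
            (stmt15_zero inner h_smul_c).le
            (stmt15_triangle inner h_add h_smul_c h_star h_pos) _ _
      _ = ∑ i, p i * ‖α i - β‖ * Real.sqrt ‖inner (x i - a) (x i - a)‖ := by
          refine Finset.sum_congr rfl fun i _ => ?_
          rw [stmt15_homog inner h_smul_c h_star, norm_mul, Complex.norm_real,
            Real.norm_of_nonneg (hp i)]
      _ ≤ ∑ i, p i * ‖α i - β‖ * r := by
          refine Finset.sum_le_sum fun i _ => ?_
          exact mul_le_mul_of_nonneg_left (hx i) (mul_nonneg (hp i) (norm_nonneg _))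
      _ = r * ∑ i, p i * ‖α i - β‖ := by
          rw [Finset.mul_sum]
          exact Finset.sum_congr rfl fun i _ => by ring
  · -- second inequality
    apply mul_le_mul_of_nonneg_left _ hr
    have hsq : ∀ z : ℂ, ‖z‖^2 = z.re^2 + z.im^2 := fun z => by
      rw [Complex.sq_norm, Complex.normSq_apply]; ring
    have hβre : β.re = ∑ i, p i * (α i).re := by
      rw [hβ, Complex.re_sum]
      exact Finset.sum_congr rfl fun i _ => by simp [Complex.mul_re]
    have hβim : β.im = ∑ i, p i * (α i).im := by
      rw [hβ, Complex.im_sum]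
      exact Finset.sum_congr rfl fun i _ => by simp [Complex.mul_im]
    have hvar : ∑ i, p i * ‖α i - β‖^2 = ∑ i, p i * ‖α i‖^2 - ‖β‖^2 := by
      have expand : ∀ i, p i * ‖α i - β‖^2 =
          p i * ‖α i‖^2 - 2*β.re*(p i * (α i).re) - 2*β.im*(p i * (α i).im)
            + (β.re^2 + β.im^2) * p i := fun i => by
        simp only [hsq, Complex.sub_re, Complex.sub_im]
        ring
      rw [Finset.sum_congr rfl fun i _ => expand i]
      rw [Finset.sum_add_distrib, Finset.sum_sub_distrib, Finset.sum_sub_distrib,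
        ← Finset.mul_sum, ← Finset.mul_sum, ← Finset.mul_sum, ← hβre, ← hβim, hp1,
        hsq β]
      ring
    have cs := Finset.sum_mul_sq_le_sq_mul_sq Finset.univ
      (fun i => Real.sqrt (p i)) (fun i => Real.sqrt (p i) * ‖α i - β‖)
    have e1 : ∀ i : Fin n, Real.sqrt (p i) * (Real.sqrt (p i) * ‖α i - β‖)
        = p i * ‖α i - β‖ := fun i => by
      rw [← mul_assoc, Real.mul_self_sqrt (hp i)]
    have e2 : ∀ i : Fin n, Real.sqrt (p i) ^ 2 = p i := fun i => Real.sq_sqrt (hp i)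
    have e3 : ∀ i : Fin n, (Real.sqrt (p i) * ‖α i - β‖) ^ 2 = p i * ‖α i - β‖^2 :=
      fun i => by rw [mul_pow, Real.sq_sqrt (hp i)]
    rw [Finset.sum_congr rfl fun i _ => e1 i, Finset.sum_congr rfl fun i _ => e2 i,
      Finset.sum_congr rfl fun i _ => e3 i, hp1, one_mul] at cs
    rw [← hvar]
    exact Real.le_sqrt_of_sq_le cs
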